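/- Let A be a unital C*-algebra and h, h' positive invertible elements of Mₘ(A) that are compatible (each entry of h commutes with each entry of h') and commute as matrices (h h' = h' h). Then h h' is positive invertible and det(h h') = det(h) det(h') = det(h') det(h), where det(k) := exp(Tr(log k)). -/

import Mathlib

section aux

variable {M : Type*} [Ring M] [StarRing M] [TopologicalSpace M]
  [IsTopologicalRing M] [T2Space M] [Algebra ℝ M]
  [ContinuousFunctionalCalculus ℝ M IsSelfAdjoint]

lemma cfc_mem_closed_subalgebra (S : Subalgebra ℝ M) (hS : IsClosed (S : Set M))
    {a : M} (ha : IsSelfAdjoint a) (haS : a ∈ S) (f : ℝ → ℝ) : cfc f a ∈ S := by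
  have : CompactSpace (spectrum ℝ a) := ContinuousFunctionalCalculus.compactSpace_spectrum (R := ℝ) a
  by_cases hf : ContinuousOn f (spectrum ℝ a)
  · rw [cfc_apply f a ha hf]
    set φ : C(spectrum ℝ a, ℝ) →⋆ₐ[ℝ] M := cfcHom ha with hφ
    set D : Subalgebra ℝ C(spectrum ℝ a, ℝ) := S.comap (φ : C(spectrum ℝ a, ℝ) →ₐ[ℝ] M) with hDdef
    have hD : IsClosed (D : Set C(spectrum ℝ a, ℝ)) :=
      hS.preimage (cfcHom_continuous ha)
    have hXD : (ContinuousMap.id ℝ).restrict (spectrum ℝ a) ∈ D := by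
      show φ _ ∈ S
      rw [hφ, cfcHom_id ha]
      exact haS
    have hsep : D.SeparatesPoints := by
      intro x y hxy
      exact ⟨_, ⟨_, hXD, rfl⟩, by simpa using Subtype.coe_injective.ne hxy⟩
    have htop : D = ⊤ := by
      have h1 := ContinuousMap.subalgebra_topologicalClosure_eq_top_of_separatesPoints D hsep
      exact top_unique (h1 ▸ Subalgebra.topologicalClosure_minimal le_rfl hD)
    have hmem : (⟨_, hf.restrict⟩ : C(spectrum ℝ a, ℝ)) ∈ D := by
      rw [htop]; trivial
    exact hmem
  · rw [cfc_apply_of_not_continuousOn a hf]; exact zero_mem S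

lemma commute_cfc_of_commute {a c : M} (ha : IsSelfAdjoint a) (hc : Commute a c) (f : ℝ → ℝ) :
    Commute (cfc f a) c := by
  set S : Subalgebra ℝ M := Subalgebra.centralizer ℝ {c} with hSdef
  have hS : IsClosed (S : Set M) := by
    have hset : (S : Set M) = {x : M | c * x = x * c} := by
      ext x
      simp [hSdef, Subalgebra.mem_centralizer_iff, Set.mem_centralizer_iff]
    rw [hset]
    exact isClosed_eq (continuous_const.mul continuous_id) (continuous_id.mul continuous_const)
  have haS : a ∈ S := by
    rw [hSdef, Subalgebra.mem_centralizer_iff]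
    rintro g rfl
    exact hc.eq.symm
  have hmem := cfc_mem_closed_subalgebra S hS ha haS f
  rw [hSdef, Subalgebra.mem_centralizer_iff] at hmem
  exact (hmem c rfl).symm

end aux

section aux2

lemma spectrum_nonneg_of_nonneg_cfc {M : Type*} [Ring M] [StarRing M] [PartialOrder M]
    [StarOrderedRing M] [TopologicalSpace M] [Algebra ℝ M]
    [ContinuousFunctionalCalculus ℝ M IsSelfAdjoint]
    {a : M} (ha : 0 ≤ a) : ∀ x ∈ spectrum ℝ a, 0 ≤ x := by
  intro t ht
  by_contra hlt
  push_neg at hlt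
  have hsa : IsSelfAdjoint a := ha.isSelfAdjoint
  set g : ℝ → ℝ := fun x => min x 0 with hg
  have hgc : ContinuousOn g (spectrum ℝ a) := (continuous_id.min continuous_const).continuousOn
  have hidc : ContinuousOn (fun x : ℝ => x) (spectrum ℝ a) := continuous_id.continuousOn
  have hcsa : IsSelfAdjoint (cfc g a) := cfc_predicate g a
  have h1 : 0 ≤ star (cfc g a) * a * cfc g a := star_left_conjugate_nonneg ha _
  have e1 : cfc (fun x : ℝ => g x * x) a = cfc g a * a := by
    rw [cfc_mul g _ a hgc hidc, cfc_id' ℝ a hsa]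
  have e2 : cfc (fun x : ℝ => (g x * x) * g x) a = cfc (fun x : ℝ => g x * x) a * cfc g a :=
    cfc_mul _ g a (hgc.mul hidc) hgc
  have h2 : star (cfc g a) * a * cfc g a = cfc (fun x : ℝ => g x * x * g x) a := by
    rw [hcsa.star_eq, e2, e1]
  have h3 : cfc (fun x : ℝ => g x * x * g x) a ≤ 0 := by
    refine cfc_nonpos _ a fun x _ => ?_
    rcases le_or_gt 0 x with hx | hx
    · simp [hg, min_eq_right hx]
    · rw [hg]
      simp only [min_eq_left hx.le]
      exact mul_nonpos_of_nonneg_of_nonpos (mul_self_nonneg x) hx.le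
  have h4 : cfc (fun x : ℝ => g x * x * g x) a = 0 := le_antisymm h3 (h2 ▸ h1)
  have h5 : cfc (fun x : ℝ => g x * x * g x) a = cfc (0 : ℝ → ℝ) a := by
    rw [h4, cfc_zero]
  have hzc : ContinuousOn (0 : ℝ → ℝ) (spectrum ℝ a) := continuousOn_const
  have h6 := cfc_eq_cfc_iff_eqOn (a := a) (hf := (hgc.mul hidc).mul hgc) (hg := hzc)
    (ha := hsa) |>.mp h5 ht
  have h7 : t * t * t = 0 := by simpa [hg, min_eq_left hlt.le] using h6
  have h8 : (t * t) * t < 0 := mul_neg_of_pos_of_neg (mul_pos_of_neg_of_neg hlt hlt) hlt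
  exact h8.ne h7

lemma entries_commute_cfc {A : Type*} [Ring A] [StarRing A] [Algebra ℝ A]
    [TopologicalSpace A] [IsTopologicalRing A] [T2Space A] {m : ℕ}
    [ContinuousFunctionalCalculus ℝ (Matrix (Fin m) (Fin m) A) IsSelfAdjoint]
    {a : Matrix (Fin m) (Fin m) A} (ha : IsSelfAdjoint a) {z : A}
    (hz : ∀ i j, Commute (a i j) z) (f : ℝ → ℝ) :
    ∀ i j, Commute (cfc f a i j) z := by
  let S : Subalgebra ℝ (Matrix (Fin m) (Fin m) A) :=
  { carrier := {w | ∀ i j, Commute (w i j) z}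
    add_mem' := fun {v w} hv hw i j => by
      simpa [Matrix.add_apply] using (hv i j).add_left (hw i j)
    mul_mem' := fun {v w} hv hw i j => by
      rw [Matrix.mul_apply]
      exact Commute.sum_left _ _ _ fun k _ => (hv i k).mul_left (hw k j)
    algebraMap_mem' := fun r i j => by
      rw [Matrix.algebraMap_matrix_apply]
      split
      · exact (Algebra.commutes r z : _)
      · exact Commute.zero_left z }
  have hS : IsClosed (S : Set (Matrix (Fin m) (Fin m) A)) := by
    have hset : (S : Set (Matrix (Fin m) (Fin m) A)) =
        ⋂ (i) (j), {w : Matrix (Fin m) (Fin m) A | w i j * z = z * w i j} := by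
      ext w
      simp only [Set.mem_iInter, Set.mem_setOf_eq, SetLike.mem_coe]
      rfl
    rw [hset]
    refine isClosed_iInter fun i => isClosed_iInter fun j => ?_
    have hcont : Continuous fun w : Matrix (Fin m) (Fin m) A => w i j :=
      (continuous_apply j).comp (continuous_apply i)
    exact isClosed_eq (hcont.mul continuous_const) (continuous_const.mul hcont)
  exact cfc_mem_closed_subalgebra S hS ha hz f

end aux2

/-- Let `A` be a unital C*-algebra and `h, h'` positive invertible elements of `Mₘ(A)`
that are compatible (each entry of `h` commutes with each entry of `h'`) and commute as
matrices. Then `h h'` is positive invertible and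
`det (h h') = det h · det h' = det h' · det h`, where `det k := exp (Tr (log k))`. -/
theorem cstar_det_mul {A : Type*} [CStarAlgebra A]
    [PartialOrder A] [StarOrderedRing A] {m : ℕ}
    [PartialOrder (Matrix (Fin m) (Fin m) A)]
    [StarOrderedRing (Matrix (Fin m) (Fin m) A)]
    [ContinuousFunctionalCalculus ℝ (Matrix (Fin m) (Fin m) A) IsSelfAdjoint]
    (h h' : Matrix (Fin m) (Fin m) A)
    (hpos : 0 ≤ h) (hinv : IsUnit h) (hpos' : 0 ≤ h') (hinv' : IsUnit h')
    (hcompat : ∀ i j k l, Commute (h i j) (h' k l))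
    (hcomm : h * h' = h' * h) :
    (0 ≤ h * h' ∧ IsUnit (h * h')) ∧
      cfc Real.exp (Matrix.trace (cfc Real.log (h * h'))) =
        cfc Real.exp (Matrix.trace (cfc Real.log h)) *
          cfc Real.exp (Matrix.trace (cfc Real.log h')) ∧
      cfc Real.exp (Matrix.trace (cfc Real.log h)) *
          cfc Real.exp (Matrix.trace (cfc Real.log h')) =
        cfc Real.exp (Matrix.trace (cfc Real.log h')) *
          cfc Real.exp (Matrix.trace (cfc Real.log h)) := by
  have hsa : IsSelfAdjoint h := hpos.isSelfAdjoint
  have hsa' : IsSelfAdjoint h' := hpos'.isSelfAdjoint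
  have hCm : Commute h h' := hcomm
  -- spectra are strictly positive
  have hspec : ∀ x ∈ spectrum ℝ h, 0 < x := fun x hx =>
    lt_of_le_of_ne (spectrum_nonneg_of_nonneg_cfc hpos x hx)
      (fun h0 => (spectrum.zero_notMem_iff ℝ).mpr hinv (h0 ▸ hx))
  have hspec' : ∀ x ∈ spectrum ℝ h', 0 < x := fun x hx =>
    lt_of_le_of_ne (spectrum_nonneg_of_nonneg_cfc hpos' x hx)
      (fun h0 => (spectrum.zero_notMem_iff ℝ).mpr hinv' (h0 ▸ hx))
  -- positivity of the product via the square root of h'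
  set s : Matrix (Fin m) (Fin m) A := cfc Real.sqrt h' with hs
  have ssa : IsSelfAdjoint s := cfc_predicate Real.sqrt h'
  have hsc : Commute s h := commute_cfc_of_commute hsa' hCm.symm Real.sqrt
  have hss : s * s = h' := by
    rw [hs, ← cfc_mul Real.sqrt Real.sqrt h' Real.continuous_sqrt.continuousOn
      Real.continuous_sqrt.continuousOn,
      cfc_congr (g := fun x : ℝ => x)
        (fun x hx => Real.mul_self_sqrt (spectrum_nonneg_of_nonneg_cfc hpos' x hx)),
      cfc_id' ℝ h' hsa']
  have hpos1 : 0 ≤ h * h' := by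
    have key : h * h' = star s * h * s := by
      rw [ssa.star_eq, ← hss, ← mul_assoc, ← hsc.eq]
    rw [key]
    exact star_left_conjugate_nonneg hpos s
  have hunit1 : IsUnit (h * h') := hinv.mul hinv'
  -- normed structure on matrices (topology is definitionally the product topology)
  letI : NormedRing (Matrix (Fin m) (Fin m) A) := Matrix.linftyOpNormedRing
  letI : NormedAlgebra ℝ (Matrix (Fin m) (Fin m) A) := Matrix.linftyOpNormedAlgebra
  letI : CompleteSpace (Matrix (Fin m) (Fin m) A) := by infer_instance
  letI : @CompleteSpace (Matrix (Fin m) (Fin m) A) PseudoMetricSpace.toUniformSpace := this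
  letI : NormedAlgebra ℚ A := NormedAlgebra.restrictScalars ℚ ℝ A
  letI : NormedAlgebra ℚ (Matrix (Fin m) (Fin m) A) :=
    NormedAlgebra.restrictScalars ℚ ℝ (Matrix (Fin m) (Fin m) A)
  set x : Matrix (Fin m) (Fin m) A := cfc Real.log h with hx
  set y : Matrix (Fin m) (Fin m) A := cfc Real.log h' with hy
  have xsa : IsSelfAdjoint x := cfc_predicate Real.log h
  have ysa : IsSelfAdjoint y := cfc_predicate Real.log h'
  have hxy : Commute x y := by
    have c1 : Commute x h' := commute_cfc_of_commute hsa hCm Real.log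
    exact (commute_cfc_of_commute hsa' c1.symm Real.log).symm
  have e1 : NormedSpace.exp x = h := by
    refine (@CFC.real_exp_eq_normedSpace_exp (Matrix (Fin m) (Fin m) A) _ _ _ ‹_› x xsa).symm.trans
      (show cfc Real.exp x = h from ?_)
    rw [hx, ← cfc_comp' Real.exp Real.log h
      Real.continuous_exp.continuousOn (Real.continuousOn_log.mono fun t ht => (hspec t ht).ne') hsa]
    conv_rhs => rw [← cfc_id' ℝ h hsa]
    exact cfc_congr fun t ht => Real.exp_log (hspec t ht)
  have e2 : NormedSpace.exp y = h' := by
    refine (@CFC.real_exp_eq_normedSpace_exp (Matrix (Fin m) (Fin m) A) _ _ _ ‹_› y ysa).symm.trans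
      (show cfc Real.exp y = h' from ?_)
    rw [hy, ← cfc_comp' Real.exp Real.log h'
      Real.continuous_exp.continuousOn (Real.continuousOn_log.mono fun t ht => (hspec' t ht).ne') hsa']
    conv_rhs => rw [← cfc_id' ℝ h' hsa']
    exact cfc_congr fun t ht => Real.exp_log (hspec' t ht)
  have e3 : NormedSpace.exp (x + y) = h * h' := by
    exact (NormedSpace.exp_add_of_commute hxy).trans (congr_arg₂ (· * ·) e1 e2)
  have hlog : cfc Real.log (h * h') = x + y := by
    rw [← e3]
    exact @CFC.log_exp (Matrix (Fin m) (Fin m) A) _ _ _ ‹_› (x + y) (xsa.add ysa)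
  -- entrywise commutation
  have ec1 : ∀ k l i j, Commute (x i j) (h' k l) := fun k l i j =>
    entries_commute_cfc hsa (fun i j => hcompat i j k l) Real.log i j
  have ecxy : ∀ i j k l, Commute (x i j) (y k l) := fun i j k l =>
    (entries_commute_cfc hsa' (fun k l => (ec1 k l i j).symm) Real.log k l).symm
  -- traces
  have trSA : ∀ w : Matrix (Fin m) (Fin m) A, IsSelfAdjoint w →
      IsSelfAdjoint (Matrix.trace w) := by
    intro w hw
    have hst : star (Matrix.trace w) = Matrix.trace (star w) := by
      simp [Matrix.trace, Matrix.diag, Matrix.star_apply]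
    rw [IsSelfAdjoint, hst, hw.star_eq]
  have sX : IsSelfAdjoint (Matrix.trace x) := trSA x xsa
  have sY : IsSelfAdjoint (Matrix.trace y) := trSA y ysa
  have hXY : Commute (Matrix.trace x) (Matrix.trace y) := by
    unfold Matrix.trace
    refine Commute.sum_left _ _ _ fun i _ => Commute.sum_right _ _ _ fun j _ => ?_
    exact ecxy i i j j
  have htr : Matrix.trace (cfc Real.log (h * h')) = Matrix.trace x + Matrix.trace y := by
    rw [hlog, Matrix.trace_add]
  refine ⟨⟨hpos1, hunit1⟩, ?_, ?_⟩
  · rw [htr, CFC.real_exp_eq_normedSpace_exp (sX.add sY), CFC.real_exp_eq_normedSpace_exp sX,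
      CFC.real_exp_eq_normedSpace_exp sY, NormedSpace.exp_add_of_commute hXY]
  · rw [CFC.real_exp_eq_normedSpace_exp sX, CFC.real_exp_eq_normedSpace_exp sY,
      ← NormedSpace.exp_add_of_commute hXY, ← NormedSpace.exp_add_of_commute hXY.symm, add_comm]
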